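/- Let F be a Fractran program and 𝒜_F the associated Fractran-type canonical collection. If the i-th trajectory value n_i in the canonical system of 𝒜_F satisfies 0 ≤ n_i < b_i − 1, then n_{i+1} = f_F(n_i) and 0 ≤ n_{i+1} < b_{i+1} − 1; in particular the trajectory from that point on equals the Fractran trajectory of n_i (padded with zeros from the step at which F halts). Moreover if n_i = b_i − 1 then n_{i+1} = 1. -/

import Mathlib

/-- One Fractran iteration: on input `n ≥ 1`, multiply by the first fraction in the
program giving an integer; return `0` if there is no such fraction (the program halts)
or if `n = 0`. -/
def fractranStep (F : List ℚ) (n : ℕ) : ℕ :=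
  if n = 0 then 0
  else
    match F.find? (fun q => ((n : ℚ) * q).den == 1) with
    | some q => ((n : ℚ) * q).num.toNat
    | none => 0

/-- The Fractran program `F` halts on input `n`. -/
def FractranHalts (F : List ℚ) (n : ℕ) : Prop :=
  ∃ k : ℕ, (fractranStep F)^[k] n = 0

/-- The base `b = 1 + ⌈max_k F_k⌉` of the Fractran-type canonical collection `𝒜_F`. -/
def bBase (F : List ℚ) : ℤ := 1 + (F.map fun q => ⌈q⌉).foldr max 0

/-- The bases of `𝒜_F`: `b_i = b^(i+1)`. -/
def bF (F : List ℚ) (i : ℕ) : ℤ := bBase F ^ (i + 1)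

/-- The digit maps of `𝒜_F` on `[0, b_i)`: `f_F` except at the exceptional value
`b_i - 1`, which is sent to `1`. -/
def digitF (F : List ℚ) (i : ℕ) (r : ℤ) : ℤ :=
  if r = bF F i - 1 then 1 else (fractranStep F r.toNat : ℤ)

/-- The residue sets of `𝒜_F`: `T_i = {r - b_i · f_i(r) : 0 ≤ r < b_i}`. -/
def TFr (F : List ℚ) (i : ℕ) : Set ℤ :=
  (fun r => r - bF F i * digitF F i r) '' Set.Ico 0 (bF F i)

/-- The canonical system maps of `𝒜_F`: `f_i(n) = (n - t_i(n)) / b_i`, where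
`t_i(n) = r - b_i · f_i(r)` with `r = n mod b_i ∈ [0, b_i)` is the unique element of
`T_i` congruent to `n` modulo `b_i`. -/
def fFr (F : List ℚ) (i : ℕ) (n : ℤ) : ℤ :=
  (n - Int.emod n (bF F i)) / bF F i + digitF F i (Int.emod n (bF F i))

/-- The trajectory of `n` in the canonical system of `𝒜_F`:
`n_0 = n`, `n_{i+1} = f_i(n_i)`. -/
def trajFr (F : List ℚ) (n : ℤ) : ℕ → ℤ
  | 0 => n
  | i + 1 => fFr F i (trajFr F n i)

lemma le_foldr_max (l : List ℤ) (x : ℤ) (hx : x ∈ l) : x ≤ l.foldr max 0 := by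
  induction l with
  | nil => simp at hx
  | cons a t ih =>
    rcases List.mem_cons.mp hx with rfl | hx
    · exact le_max_left _ _
    · exact le_trans (ih hx) (le_max_right _ _)

lemma bBase_ge_two (F : List ℚ) (hne : F ≠ []) (hpos : ∀ q ∈ F, 0 < q) :
    2 ≤ bBase F := by
  obtain ⟨q, hq⟩ := List.exists_mem_of_ne_nil F hne
  have h1 : 1 ≤ ⌈q⌉ := Int.one_le_ceil_iff.mpr (hpos q hq)
  have h2 : ⌈q⌉ ≤ (F.map fun q => ⌈q⌉).foldr max 0 :=
    le_foldr_max _ _ (List.mem_map_of_mem hq)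
  unfold bBase; omega

lemma fractranStep_le (F : List ℚ) (hpos : ∀ q ∈ F, 0 < q) (n : ℕ) :
    (fractranStep F n : ℤ) ≤ (n : ℤ) * (bBase F - 1) := by
  have hM : (0:ℤ) ≤ bBase F - 1 := by
    have : (0:ℤ) ≤ (F.map fun q => ⌈q⌉).foldr max 0 := by
      induction (F.map fun q => ⌈q⌉) with
      | nil => simp
      | cons a t ih => exact le_trans ih (le_max_right _ _)
    unfold bBase; omega
  unfold fractranStep
  split
  · simpa using mul_nonneg (by positivity) hM
  next hn =>
    cases hfind : F.find? (fun q => ((n : ℚ) * q).den == 1) with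
    | none => simpa using mul_nonneg (by positivity) hM
    | some q =>
      have hq : q ∈ F := List.mem_of_find?_eq_some hfind
      have hden : ((n:ℚ)*q).den = 1 := by simpa using List.find?_some hfind
      have hnn : (0:ℚ) ≤ (n:ℚ)*q := mul_nonneg (by positivity) (hpos q hq).le
      have hnum : 0 ≤ ((n:ℚ)*q).num := Rat.num_nonneg.mpr hnn
      rw [Int.toNat_of_nonneg hnum]
      have hcast : (((n:ℚ)*q).num : ℚ) = (n:ℚ)*q := Rat.den_eq_one_iff _ |>.mp hden
      have hqle : q ≤ (⌈q⌉ : ℚ) := Int.le_ceil q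
      have hMle : (⌈q⌉:ℤ) ≤ bBase F - 1 := by
        have h := le_foldr_max _ _ (List.mem_map_of_mem (f := fun q => ⌈q⌉) hq)
        unfold bBase; omega
      have : ((n:ℚ)*q) ≤ (n:ℚ) * ((bBase F - 1 : ℤ) : ℚ) := by
        calc (n:ℚ)*q ≤ (n:ℚ) * (⌈q⌉:ℚ) := by
              exact mul_le_mul_of_nonneg_left hqle (by positivity)
          _ ≤ (n:ℚ) * ((bBase F - 1 : ℤ) : ℚ) := by
              exact mul_le_mul_of_nonneg_left (by exact_mod_cast hMle) (by positivity)
      have : (((n:ℚ)*q).num : ℚ) ≤ (((n:ℤ) * (bBase F - 1) : ℤ) : ℚ) := by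
        rw [hcast]; push_cast at this ⊢; exact this
      exact_mod_cast this

lemma step_lemma (F : List ℚ) (hne : F ≠ []) (hpos : ∀ q ∈ F, 0 < q)
    (i : ℕ) (n : ℤ) (h0 : 0 ≤ n) (h1 : n < bF F i - 1) :
    fFr F i n = (fractranStep F n.toNat : ℤ) ∧
    (fractranStep F n.toNat : ℤ) < bF F (i+1) - 1 := by
  have hb := bBase_ge_two F hne hpos
  have hbi : (2:ℤ) ≤ bF F i := by
    unfold bF
    calc (2:ℤ) = 2^1 := by norm_num
      _ ≤ 2^(i+1) := by exact pow_le_pow_right₀ (by norm_num) (by omega)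
      _ ≤ bBase F ^ (i+1) := pow_le_pow_left₀ (by norm_num) hb _
  have hmod : Int.emod n (bF F i) = n := Int.emod_eq_of_lt h0 (by omega)
  have hfeq : fFr F i n = (fractranStep F n.toNat : ℤ) := by
    unfold fFr digitF
    rw [hmod, if_neg (by omega)]
    simp
  refine ⟨hfeq, ?_⟩
  have hle := fractranStep_le F hpos n.toNat
  rw [Int.toNat_of_nonneg h0] at hle
  have key : n * (bBase F - 1) < bF F (i+1) - 1 := by
    have hbexp : bF F (i+1) = bF F i * bBase F := by
      unfold bF; ring
    nlinarith [hbi, hb, h1, h0]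
  calc (fractranStep F n.toNat : ℤ) ≤ n * (bBase F - 1) := hle
    _ < bF F (i+1) - 1 := key

lemma exceptional (F : List ℚ) (hne : F ≠ []) (hpos : ∀ q ∈ F, 0 < q) (j : ℕ) :
    fFr F j (bF F j - 1) = 1 := by
  have hb := bBase_ge_two F hne hpos
  have hbi : (2:ℤ) ≤ bF F j := by
    unfold bF
    calc (2:ℤ) = 2^1 := by norm_num
      _ ≤ 2^(j+1) := by exact pow_le_pow_right₀ (by norm_num) (by omega)
      _ ≤ bBase F ^ (j+1) := pow_le_pow_left₀ (by norm_num) hb _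
  have hmod : Int.emod (bF F j - 1) (bF F j) = bF F j - 1 :=
    Int.emod_eq_of_lt (by omega) (by omega)
  unfold fFr digitF
  rw [hmod, if_pos rfl]
  simp

/-- If a trajectory value `n_i` in the canonical system of `𝒜_F` satisfies
`0 ≤ n_i < b_i - 1`, then `n_{i+1} = f_F(n_i)` and `0 ≤ n_{i+1} < b_{i+1} - 1`; from
that point on the trajectory equals the Fractran trajectory of `n_i` (padded with zeros
once `F` halts).  Moreover the exceptional value `b_j - 1` is sent to `1`. -/
theorem trajectory_follows_fractran
    (F : List ℚ) (hne : F ≠ []) (hpos : ∀ q ∈ F, 0 < q)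
    (traj : ℕ → ℤ) (htraj : ∀ j : ℕ, traj (j + 1) = fFr F j (traj j))
    (i : ℕ) (h0 : 0 ≤ traj i) (h1 : traj i < bF F i - 1) :
    (traj (i + 1) = (fractranStep F (traj i).toNat : ℤ) ∧
      0 ≤ traj (i + 1) ∧ traj (i + 1) < bF F (i + 1) - 1 ∧
      ∀ k : ℕ, traj (i + k) = ((fractranStep F)^[k] (traj i).toNat : ℤ)) ∧
    (∀ j : ℕ, fFr F j (bF F j - 1) = 1) := by
  have key : ∀ k : ℕ, 0 ≤ traj (i + k) ∧ traj (i + k) < bF F (i + k) - 1 ∧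
      traj (i + k) = ((fractranStep F)^[k] (traj i).toNat : ℤ) := by
    intro k
    induction k with
    | zero => exact ⟨h0, h1, by simp [Int.toNat_of_nonneg h0]⟩
    | succ k ih =>
      obtain ⟨ih0, ih1, ih2⟩ := ih
      obtain ⟨hs1, hs2⟩ := step_lemma F hne hpos (i + k) _ ih0 ih1
      have ht : traj (i + (k + 1)) = fFr F (i + k) (traj (i + k)) := by
        have := htraj (i + k); rwa [show i + k + 1 = i + (k + 1) by omega] at this
      have htoNat : (traj (i + k)).toNat = (fractranStep F)^[k] (traj i).toNat := by
        rw [ih2]; exact Int.toNat_natCast _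
      refine ⟨?_, ?_, ?_⟩
      · rw [ht, hs1]; positivity
      · rw [ht, hs1]
        rwa [show i + (k + 1) = (i + k) + 1 by omega]
      · rw [ht, hs1, htoNat, Function.iterate_succ_apply']
  have k1 := key 1
  rw [show i + 1 = i + 1 from rfl] at k1
  refine ⟨⟨?_, k1.1, k1.2.1, fun k => (key k).2.2⟩, exceptional F hne hpos⟩
  rw [k1.2.2]; simp
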